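/- For a cycle graph C_n with n ≥ 3 and any β with 1/2 ≤ β < 1, the β-packing number of C_n equals n - 2. -/

import Mathlib

open scoped Classical

/-- `S` satisfies the β-packing property: `S` is a proper subset of the vertex set
and every vertex outside `S` has at most a β-fraction of its neighbors inside `S`. -/
def PackProp {V : Type*} [Fintype V] (G : SimpleGraph V) (β : ℝ) (S : Finset V) : Prop :=
  S ≠ Finset.univ ∧
    ∀ v ∉ S, ((G.neighborFinset v ∩ S).card : ℝ) ≤ β * (G.degree v : ℝ)

/-- `S` is a β-packing set: it satisfies the β-packing property and is maximal with it. -/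
def IsBetaPacking {V : Type*} [Fintype V] (G : SimpleGraph V) (β : ℝ) (S : Finset V) : Prop :=
  PackProp G β S ∧ ∀ T : Finset V, PackProp G β T → S ⊆ T → S = T

/-- The β-packing number: maximum cardinality of a β-packing set. -/
noncomputable def betaPack {V : Type*} [Fintype V] (G : SimpleGraph V) (β : ℝ) : ℕ :=
  sSup {k : ℕ | ∃ S : Finset V, IsBetaPacking G β S ∧ S.card = k}

section Aux

variable {m : ℕ} {β : ℝ}

lemma aux_sub_ne_add (v : Fin (m+3)) : v - 1 ≠ v + 1 := by
  intro h
  have h2 : v - 1 - (v - 1) = v + 1 - (v - 1) := by rw [h]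
  rw [sub_self] at h2
  have h3 : (0 : Fin (m+3)) = 2 := by rw [h2]; open Fin.CommRing in ring
  simp [Fin.ext_iff, Nat.mod_eq_of_lt (show 2 < m+3 by omega)] at h3

lemma aux_zero_ne_one : (0 : Fin (m+3)) ≠ 1 := by simp [Fin.ext_iff]

lemma aux_two_ne_zero : (2 : Fin (m+3)) ≠ 0 := by simp [Fin.ext_iff, Nat.mod_eq_of_lt (show 2 < m+3 by omega)]
lemma aux_two_ne_one : (2 : Fin (m+3)) ≠ 1 := by simp [Fin.ext_iff, Nat.mod_eq_of_lt (show 2 < m+3 by omega)]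

lemma aux_neg_ne_zero : (0 : Fin (m+3)) - 1 ≠ 0 := by
  intro h; rw [sub_eq_zero] at h; simp [Fin.ext_iff] at h

lemma aux_neg_ne_one : (0 : Fin (m+3)) - 1 ≠ 1 := by
  intro h; rw [sub_eq_iff_eq_add] at h
  have h3 : (0 : Fin (m+3)) = 2 := by rw [h]; open Fin.CommRing in ring
  simp [Fin.ext_iff, Nat.mod_eq_of_lt (show 2 < m+3 by omega)] at h3

lemma aux_adj_iff {v x : Fin (m+3)} :
    (SimpleGraph.cycleGraph (m+3)).Adj v x ↔ x = v - 1 ∨ x = v + 1 := by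
  rw [SimpleGraph.cycleGraph_adj']
  have hv1 : ((1 : Fin (m+3)) : ℕ) = 1 := by simp
  constructor
  · rintro (h | h)
    · left
      have hv : v - x = 1 := by rw [Fin.ext_iff, hv1]; exact h
      rw [sub_eq_iff_eq_add] at hv
      rw [hv]; open Fin.CommRing in ring
    · right
      have hv : x - v = 1 := by rw [Fin.ext_iff, hv1]; exact h
      rw [sub_eq_iff_eq_add] at hv
      rw [hv]; open Fin.CommRing in ring
  · rintro (rfl | rfl)
    · left
      rw [sub_sub_cancel, hv1]
    · right
      rw [add_sub_cancel_left, hv1]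

lemma aux_nbhd (v : Fin (m+3))
    {inst : Fintype ((SimpleGraph.cycleGraph (m+3)).neighborSet v)} :
    @SimpleGraph.neighborFinset _ (SimpleGraph.cycleGraph (m+3)) v inst = {v - 1, v + 1} := by
  ext x
  rw [SimpleGraph.mem_neighborFinset, aux_adj_iff]
  simp

lemma aux_card_eq_two {d : DecidableEq (Fin (m+3))} {v : Fin (m+3)}
    {i : Fintype ((SimpleGraph.cycleGraph (m+3)).neighborSet v)} {S : Finset (Fin (m+3))}
    (h1 : v - 1 ∈ S) (h2 : v + 1 ∈ S) :
    (@Inter.inter _ (@Finset.instInter _ d) (@SimpleGraph.neighborFinset _ _ v i) S).card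
      = 2 := by
  have h : @Inter.inter _ (@Finset.instInter _ d) (@SimpleGraph.neighborFinset _ _ v i) S
      = ({v - 1, v + 1} : Finset (Fin (m+3))) := by
    ext x
    rw [Finset.mem_inter, SimpleGraph.mem_neighborFinset, aux_adj_iff,
      Finset.mem_insert, Finset.mem_singleton]
    constructor
    · exact fun hx => hx.1
    · rintro (rfl | rfl)
      · exact ⟨Or.inl rfl, h1⟩
      · exact ⟨Or.inr rfl, h2⟩
  rw [h, Finset.card_pair (aux_sub_ne_add v)]

lemma aux_card_le_one {d : DecidableEq (Fin (m+3))} {v : Fin (m+3)}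
    {i : Fintype ((SimpleGraph.cycleGraph (m+3)).neighborSet v)} {S : Finset (Fin (m+3))}
    (hb : v - 1 ∉ S ∨ v + 1 ∉ S) :
    (@Inter.inter _ (@Finset.instInter _ d) (@SimpleGraph.neighborFinset _ _ v i) S).card
      ≤ 1 := by
  rcases hb with hb | hb
  · have h : @Inter.inter _ (@Finset.instInter _ d) (@SimpleGraph.neighborFinset _ _ v i) S
        ⊆ ({v + 1} : Finset (Fin (m+3))) := by
      intro x hx
      rw [Finset.mem_inter, SimpleGraph.mem_neighborFinset, aux_adj_iff] at hx
      rw [Finset.mem_singleton]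
      rcases hx.1 with rfl | rfl
      · exact absurd hx.2 hb
      · rfl
    simpa using Finset.card_le_card h
  · have h : @Inter.inter _ (@Finset.instInter _ d) (@SimpleGraph.neighborFinset _ _ v i) S
        ⊆ ({v - 1} : Finset (Fin (m+3))) := by
      intro x hx
      rw [Finset.mem_inter, SimpleGraph.mem_neighborFinset, aux_adj_iff] at hx
      rw [Finset.mem_singleton]
      rcases hx.1 with rfl | rfl
      · rfl
      · exact absurd hx.2 hb
    simpa using Finset.card_le_card h

lemma aux_deg (v : Fin (m+3))
    {inst : Fintype ((SimpleGraph.cycleGraph (m+3)).neighborSet v)} :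
    @SimpleGraph.degree _ (SimpleGraph.cycleGraph (m+3)) v inst = 2 := by
  show (@SimpleGraph.neighborFinset _ (SimpleGraph.cycleGraph (m+3)) v inst).card = 2
  rw [aux_nbhd, Finset.card_pair (aux_sub_ne_add v)]

/-- Key: if `S` has the pack-property and `v ∉ S`, not both neighbors of `v` are in `S`. -/
lemma aux_not_both (hβ2 : β < 1) {S : Finset (Fin (m+3))}
    (hS : PackProp (SimpleGraph.cycleGraph (m+3)) β S) {v : Fin (m+3)} (hv : v ∉ S)
    (h1 : v - 1 ∈ S) (h2 : v + 1 ∈ S) : False := by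
  have hcard := hS.2 v hv
  rw [aux_card_eq_two h1 h2, aux_deg] at hcard
  push_cast at hcard
  nlinarith

/-- Upper bound on the size of any pack-property set. -/
lemma aux_card_le (hβ2 : β < 1) {S : Finset (Fin (m+3))}
    (hS : PackProp (SimpleGraph.cycleGraph (m+3)) β S) : S.card ≤ m + 1 := by
  obtain ⟨v, hv⟩ : ∃ v, v ∉ S := by
    by_contra h
    push_neg at h
    exact hS.1 (Finset.eq_univ_iff_forall.mpr h)
  have : v - 1 ∉ S ∨ v + 1 ∉ S := by
    by_contra h
    push_neg at h
    exact aux_not_both hβ2 hS hv h.1 h.2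
  obtain ⟨w, hw, hwv⟩ : ∃ w, w ∉ S ∧ w ≠ v := by
    rcases this with h | h
    · exact ⟨v - 1, h, fun he => by simp [sub_eq_self, Fin.ext_iff] at he⟩
    · exact ⟨v + 1, h, fun he => by simp [Fin.ext_iff] at he⟩
  have hsub : S ⊆ Finset.univ \ {v, w} := by
    intro x hx
    simp only [Finset.mem_sdiff, Finset.mem_univ, true_and, Finset.mem_insert,
      Finset.mem_singleton]
    rintro (rfl | rfl) <;> [exact hv hx; exact hw hx]
  have h2 := Finset.card_le_card hsub
  rw [Finset.card_sdiff_of_subset (by simp), Finset.card_univ, Fintype.card_fin,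
    Finset.card_pair (Ne.symm hwv)] at h2
  omega

/-- The witness set. -/
noncomputable def S₀ (m : ℕ) : Finset (Fin (m+3)) := Finset.univ \ {0, 1}

lemma S₀_card : (S₀ m).card = m + 1 := by
  rw [S₀, Finset.card_sdiff_of_subset (by simp), Finset.card_univ, Fintype.card_fin,
    Finset.card_pair aux_zero_ne_one]
  omega

lemma mem_S₀ {x : Fin (m+3)} : x ∈ S₀ m ↔ x ≠ 0 ∧ x ≠ 1 := by
  simp [S₀, and_comm]

lemma aux_pack_S₀ (hβ1 : 1/2 ≤ β) : PackProp (SimpleGraph.cycleGraph (m+3)) β (S₀ m) := by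
  constructor
  · intro h
    have h0 : (0 : Fin (m+3)) ∈ S₀ m := h ▸ Finset.mem_univ _
    rw [mem_S₀] at h0
    exact h0.1 rfl
  · intro v hv
    rw [aux_deg]
    rw [mem_S₀] at hv
    push_neg at hv
    have hb : v - 1 ∉ S₀ m ∨ v + 1 ∉ S₀ m := by
      by_cases h0 : v = 0
      · subst h0
        right
        rw [zero_add, mem_S₀]
        push_neg
        intro _; rfl
      · have h1 : v = 1 := hv h0
        subst h1
        left
        rw [show (1:Fin (m+3)) - 1 = 0 by open Fin.CommRing in ring, mem_S₀]
        push_neg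
        intro h; exact absurd rfl h
    refine le_trans ?_ (show (1:ℝ) ≤ β * (2:ℕ) by push_cast; linarith)
    exact_mod_cast aux_card_le_one hb

lemma aux_packing_S₀ (hβ1 : 1/2 ≤ β) (hβ2 : β < 1) :
    IsBetaPacking (SimpleGraph.cycleGraph (m+3)) β (S₀ m) := by
  refine ⟨aux_pack_S₀ hβ1, ?_⟩
  intro T hT hsub
  have h01 : ¬((0 : Fin (m+3)) ∈ T ∧ (1 : Fin (m+3)) ∈ T) := by
    rintro ⟨h0, h1⟩
    apply hT.1
    rw [Finset.eq_univ_iff_forall]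
    intro x
    by_cases hx : x ∈ S₀ m
    · exact hsub hx
    · rw [mem_S₀] at hx
      push_neg at hx
      by_cases hx0 : x = 0
      · subst hx0; exact h0
      · rw [hx hx0]; exact h1
  by_cases h0 : (0 : Fin (m+3)) ∈ T
  · have h1 : (1 : Fin (m+3)) ∉ T := fun h => h01 ⟨h0, h⟩
    exfalso
    apply aux_not_both hβ2 hT h1
    · show (1:Fin (m+3)) - 1 ∈ T
      rw [show (1:Fin (m+3)) - 1 = 0 by open Fin.CommRing in ring]
      exact h0
    · show (1:Fin (m+3)) + 1 ∈ T
      rw [show (1:Fin (m+3)) + 1 = 2 by open Fin.CommRing in ring]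
      exact hsub (mem_S₀.mpr ⟨aux_two_ne_zero, aux_two_ne_one⟩)
  · by_cases h1 : (1 : Fin (m+3)) ∈ T
    · exfalso
      apply aux_not_both hβ2 hT h0
      · exact hsub (mem_S₀.mpr ⟨aux_neg_ne_zero, aux_neg_ne_one⟩)
      · show (0:Fin (m+3)) + 1 ∈ T
        rw [zero_add]
        exact h1
    · apply Finset.Subset.antisymm hsub
      intro x hx
      rw [mem_S₀]
      exact ⟨fun h => h0 (h ▸ hx), fun h => h1 (h ▸ hx)⟩

end Aux

theorem stmt_4 (n : ℕ) (hn : 3 ≤ n) (β : ℝ) (hβ1 : 1/2 ≤ β) (hβ2 : β < 1) :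
    betaPack (SimpleGraph.cycleGraph n) β = n - 2 := by
  obtain ⟨m, rfl⟩ : ∃ m, n = m + 3 := ⟨n - 3, by omega⟩
  have hub : ∀ k ∈ {k : ℕ | ∃ S : Finset (Fin (m+3)),
      IsBetaPacking (SimpleGraph.cycleGraph (m+3)) β S ∧ S.card = k}, k ≤ m + 1 := by
    rintro k ⟨S, hS, rfl⟩
    exact aux_card_le hβ2 hS.1
  have hmem : m + 1 ∈ {k : ℕ | ∃ S : Finset (Fin (m+3)),
      IsBetaPacking (SimpleGraph.cycleGraph (m+3)) β S ∧ S.card = k} :=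
    ⟨S₀ m, aux_packing_S₀ hβ1 hβ2, S₀_card⟩
  have hval : betaPack (SimpleGraph.cycleGraph (m+3)) β = m + 1 := by
    unfold betaPack
    exact le_antisymm (csSup_le ⟨m + 1, hmem⟩ hub) (le_csSup ⟨m + 1, hub⟩ hmem)
  omega
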